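/- Let d, N ≥ 1, σ > 0, and let W : (ℝ^d)^N → ℝ be continuous, bounded, and ℤ^d-periodic in each of its N arguments. Define Z₁ = ∫_{([0,1]^d)^N} e^{-W/σ}, Ẑ₁ = ∫_{([0,1]^d)^N} e^{W/σ}, and for a unit vector e ∈ ℝ^d define m(e) = (1/Z₁) · inf { ∫_{([0,1]^d)^N} |e + ∇v₁(y₁) + ⋯ + ∇v_N(y_N)|² e^{-W(y₁,…,y_N)/σ} dy : v₁,…,v_N : ℝ^d → ℝ C¹ and ℤ^d-periodic }. Then 0 < e^{-osc(W)/σ} ≤ 1/(Z₁·Ẑ₁) ≤ m(e) ≤ 1, where osc(W) = sup W − inf W. -/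

import Mathlib

open MeasureTheory

/-- Euclidean gradient of `f : ℝ^d → ℝ` as a vector of partial derivatives. -/
noncomputable def grad {d : ℕ} (f : (Fin d → ℝ) → ℝ) (x : Fin d → ℝ) : Fin d → ℝ :=
  fun i => fderiv ℝ f x (Pi.single i 1)

/-- `f : ℝ^d → ℝ` is `ℤ^d`-periodic. -/
def ZdPeriodic {d : ℕ} (f : (Fin d → ℝ) → ℝ) : Prop :=
  ∀ (x : Fin d → ℝ) (k : Fin d → ℤ), f (x + fun i => (k i : ℝ)) = f x

/-- The variational quadratic form `m(e)` of the effective diffusion tensor: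
`m(e) = Z₁⁻¹ · inf { ∫ |e + ∇v₁(y₁) + ⋯ + ∇v_N(y_N)|² e^{-W/σ} : vᵢ C¹, ℤ^d-periodic }`. -/
noncomputable def mEff (d N : ℕ) (σ : ℝ) (W : (Fin N → Fin d → ℝ) → ℝ) (e : Fin d → ℝ) : ℝ :=
  (∫ y in Set.Icc (0 : Fin N → Fin d → ℝ) 1, Real.exp (-W y / σ))⁻¹ *
    sInf { r : ℝ | ∃ v : Fin N → (Fin d → ℝ) → ℝ,
      (∀ i, ContDiff ℝ 1 (v i)) ∧ (∀ i, ZdPeriodic (v i)) ∧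
      r = ∫ y in Set.Icc (0 : Fin N → Fin d → ℝ) 1,
            (∑ j, (e j + ∑ i, grad (v i) (y i) j) ^ 2) * Real.exp (-W y / σ) }

lemma cubevol (d : ℕ) : (volume (Set.Icc (0 : Fin d → ℝ) 1)) = 1 := by
  rw [← Set.pi_univ_Icc, volume_pi_pi]
  simp [Real.volume_Icc]

lemma cubevolNd (d N : ℕ) : (volume (Set.Icc (0 : Fin N → Fin d → ℝ) 1)) = 1 := by
  rw [← Set.pi_univ_Icc, volume_pi_pi]
  simp only [Pi.zero_apply, Pi.one_apply]
  rw [Finset.prod_congr rfl fun i _ => cubevol d]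
  simp

lemma marg (d N : ℕ) (i : Fin N) (g : (Fin d → ℝ) → ℝ) :
    ∫ y in Set.Icc (0 : Fin N → Fin d → ℝ) 1, g (y i)
      = ∫ x in Set.Icc (0 : Fin d → ℝ) 1, g x := by
  rw [← integral_indicator measurableSet_Icc]
  have hfun : (Set.indicator (Set.Icc (0 : Fin N → Fin d → ℝ) 1) (fun y => g (y i)))
      = fun y => ∏ k, Set.indicator (Set.Icc (0 : Fin d → ℝ) 1)
          (fun x => if k = i then g x else 1) (y k) := by
    funext y
    by_cases hy : y ∈ Set.Icc (0 : Fin N → Fin d → ℝ) 1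
    · have hyk : ∀ k, y k ∈ Set.Icc (0 : Fin d → ℝ) 1 := by
        intro k
        exact ⟨fun j => hy.1 k j, fun j => hy.2 k j⟩
      rw [Set.indicator_of_mem hy]
      rw [Finset.prod_congr rfl fun k _ => Set.indicator_of_mem (hyk k) _]
      simp
    · have : ∃ k, y k ∉ Set.Icc (0 : Fin d → ℝ) 1 := by
        by_contra h
        push_neg at h
        exact hy ⟨fun k j => (h k).1 j, fun k j => (h k).2 j⟩
      obtain ⟨k, hk⟩ := this
      rw [Set.indicator_of_notMem hy]
      rw [eq_comm, Finset.prod_eq_zero (Finset.mem_univ k)]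
      rw [Set.indicator_of_notMem hk]
  rw [hfun]
  erw [MeasureTheory.integral_fintype_prod_eq_prod (𝕜 := ℝ) (ι := Fin N)
    (f := fun k (x : Fin d → ℝ) => Set.indicator (Set.Icc (0 : Fin d → ℝ) 1)
      (fun x => if k = i then g x else 1) x) (μ := fun _ => volume)]
  have hfac : ∀ k : Fin N, (∫ x, Set.indicator (Set.Icc (0 : Fin d → ℝ) 1)
      (fun x => if k = i then g x else 1) x)
        = if k = i then ∫ x in Set.Icc (0 : Fin d → ℝ) 1, g x else 1 := by
    intro k
    rw [integral_indicator measurableSet_Icc]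
    by_cases h : k = i
    · simp [h]
    · simp only [h, if_false]
      rw [setIntegral_const, measureReal_def, cubevol d]
      simp
  rw [Finset.prod_congr rfl fun k _ => hfac k]
  simp

lemma gradCont {d : ℕ} {v : (Fin d → ℝ) → ℝ} (hv : ContDiff ℝ 1 v) (j : Fin d) :
    Continuous (fun x => grad v x j) :=
  ((hv.fderiv_right (m := 0) le_rfl).continuous).clm_apply continuous_const

lemma keyGrad {n : ℕ} (v : (Fin (n+1) → ℝ) → ℝ) (hv : ContDiff ℝ 1 v)
    (hp : ZdPeriodic v) (j : Fin (n+1)) :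
    ∫ x in Set.Icc (0 : Fin (n+1) → ℝ) 1, grad v x j = 0 := by
  set e := MeasurableEquiv.piFinSuccAbove (fun _ : Fin (n+1) => ℝ) j with he
  have hmp : MeasurePreserving e volume volume :=
    volume_preserving_piFinSuccAbove (fun _ : Fin (n+1) => ℝ) j
  have hpre : e ⁻¹' (Set.Icc (0:ℝ) 1 ×ˢ Set.Icc (0 : Fin n → ℝ) 1)
      = Set.Icc (0 : Fin (n+1) → ℝ) 1 := by
    ext x
    simp only [Set.mem_preimage, Set.mem_prod, Set.mem_Icc, he,
      MeasurableEquiv.piFinSuccAbove_apply]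
    constructor
    · rintro ⟨⟨h1, h2⟩, h3, h4⟩
      constructor <;> intro i <;> by_cases h : i = j
      · subst h; simpa using h1
      · obtain ⟨k, rfl⟩ := Fin.exists_succAbove_eq h
        exact h3 k
      · subst h; simpa using h2
      · obtain ⟨k, rfl⟩ := Fin.exists_succAbove_eq h
        exact h4 k
    · rintro ⟨h1, h2⟩
      exact ⟨⟨h1 j, h2 j⟩, fun k => h1 _, fun k => h2 _⟩
  have hlin : ∀ (a : ℝ) (z : Fin n → ℝ),
      (j.insertNth a z : Fin (n+1) → ℝ)
        = (j.insertNth 0 z : Fin (n+1) → ℝ) + a • (Pi.single j 1 : Fin (n+1) → ℝ) := by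
    intro a z
    funext i
    by_cases h : i = j
    · subst h; simp
    · obtain ⟨k, rfl⟩ := Fin.exists_succAbove_eq h
      simp [Pi.single_eq_of_ne (Fin.succAbove_ne j k)]
  have hgc : Continuous (fun x => grad v x j) := gradCont hv j
  have hic : Continuous (fun p : ℝ × (Fin n → ℝ) => (j.insertNth p.1 p.2 : Fin (n+1) → ℝ)) := by
    apply continuous_pi
    intro i
    by_cases h : i = j
    · subst h; simpa using continuous_fst
    · obtain ⟨k, rfl⟩ := Fin.exists_succAbove_eq h
      simpa using (continuous_apply k).comp' continuous_snd
  have hsymm : ∀ p : ℝ × (Fin n → ℝ), e.symm p = (j.insertNth p.1 p.2 : Fin (n+1) → ℝ) := by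
    intro p
    rfl
  have hint : Integrable (fun p : ℝ × (Fin n → ℝ) => grad v (j.insertNth p.1 p.2) j)
      ((volume.restrict (Set.Icc (0:ℝ) 1)).prod (volume.restrict (Set.Icc (0 : Fin n → ℝ) 1))) := by
    rw [Measure.prod_restrict]
    exact (hgc.comp hic).continuousOn.integrableOn_compact
      (isCompact_Icc.prod isCompact_Icc)
  have hinner : ∀ z : Fin n → ℝ,
      ∫ a in Set.Icc (0:ℝ) 1, grad v (j.insertNth a z) j = 0 := by
    intro z
    set c : Fin (n+1) → ℝ := j.insertNth 0 z with hc
    have hline : ∀ a : ℝ,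
        HasDerivAt (fun a : ℝ => v (c + a • (Pi.single j 1 : Fin (n+1) → ℝ)))
          (grad v (c + a • (Pi.single j 1 : Fin (n+1) → ℝ)) j) a := by
      intro a
      have h1 : HasDerivAt (fun a : ℝ => c + a • (Pi.single j 1 : Fin (n+1) → ℝ))
          (Pi.single j 1 : Fin (n+1) → ℝ) a := by
        simpa using ((hasDerivAt_id a).smul_const (Pi.single j 1 : Fin (n+1) → ℝ)).const_add c
      exact (hv.differentiable one_ne_zero _).hasFDerivAt.comp_hasDerivAt a h1
    have hper : v (c + (Pi.single j 1 : Fin (n+1) → ℝ)) = v c := by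
      have hcast : (fun i => ((Pi.single j (1:ℤ) : Fin (n+1) → ℤ) i : ℝ))
          = (Pi.single j 1 : Fin (n+1) → ℝ) := by
        funext i
        by_cases h : i = j <;> simp [Pi.single_apply, h]
      rw [← hcast]
      exact hp c (Pi.single j (1:ℤ))
    have hcont' : Continuous (fun a : ℝ => grad v (c + a • (Pi.single j 1 : Fin (n+1) → ℝ)) j) :=
      hgc.comp (continuous_const.add (continuous_id.smul continuous_const))
    calc ∫ a in Set.Icc (0:ℝ) 1, grad v (j.insertNth a z) j
        = ∫ a in Set.Icc (0:ℝ) 1, grad v (c + a • (Pi.single j 1 : Fin (n+1) → ℝ)) j := by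
          apply setIntegral_congr_fun measurableSet_Icc
          intro a _
          simp only []
          rw [hlin a z]
      _ = ∫ a in Set.Ioc (0:ℝ) 1, grad v (c + a • (Pi.single j 1 : Fin (n+1) → ℝ)) j :=
          integral_Icc_eq_integral_Ioc
      _ = ∫ a in (0:ℝ)..1, grad v (c + a • (Pi.single j 1 : Fin (n+1) → ℝ)) j :=
          (intervalIntegral.integral_of_le zero_le_one).symm
      _ = v (c + (1:ℝ) • (Pi.single j 1 : Fin (n+1) → ℝ))
            - v (c + (0:ℝ) • (Pi.single j 1 : Fin (n+1) → ℝ)) :=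
          intervalIntegral.integral_eq_sub_of_hasDerivAt (fun a _ => hline a)
            (hcont'.intervalIntegrable 0 1)
      _ = 0 := by
          rw [one_smul, zero_smul, add_zero, hper, sub_self]
  calc ∫ x in Set.Icc (0 : Fin (n+1) → ℝ) 1, grad v x j
      = ∫ x in e ⁻¹' (Set.Icc (0:ℝ) 1 ×ˢ Set.Icc (0 : Fin n → ℝ) 1),
          (fun p : ℝ × (Fin n → ℝ) => grad v (j.insertNth p.1 p.2) j) (e x) := by
        rw [hpre]
        apply setIntegral_congr_fun measurableSet_Icc
        intro x _
        have : (j.insertNth (e x).1 (e x).2 : Fin (n+1) → ℝ) = x := by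
          rw [← hsymm]
          exact e.symm_apply_apply x
        simp only [this]
    _ = ∫ p in (Set.Icc (0:ℝ) 1 ×ˢ Set.Icc (0 : Fin n → ℝ) 1),
          grad v (j.insertNth p.1 p.2) j :=
        hmp.setIntegral_preimage_emb (MeasurableEquiv.measurableEmbedding e)
          (fun p : ℝ × (Fin n → ℝ) => grad v (j.insertNth p.1 p.2) j) _
    _ = ∫ z in Set.Icc (0 : Fin n → ℝ) 1, ∫ a in Set.Icc (0:ℝ) 1,
          grad v (j.insertNth a z) j := by
        rw [Measure.volume_eq_prod, ← Measure.prod_restrict]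
        exact integral_prod_symm _ hint
    _ = 0 := by simp only [hinner]; simp

lemma keyGrad' {d : ℕ} (hd : 1 ≤ d) (v : (Fin d → ℝ) → ℝ) (hv : ContDiff ℝ 1 v)
    (hp : ZdPeriodic v) (j : Fin d) :
    ∫ x in Set.Icc (0 : Fin d → ℝ) 1, grad v x j = 0 := by
  obtain ⟨n, rfl⟩ : ∃ n, d = n + 1 := ⟨d - 1, (Nat.succ_pred_eq_of_pos hd).symm⟩
  exact keyGrad v hv hp j

lemma csInt {α : Type*} [MeasurableSpace α] (μ : Measure α) (f g : α → ℝ)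
    (hf2 : Integrable (fun x => f x * f x) μ) (hg2 : Integrable (fun x => g x * g x) μ)
    (hfg : Integrable (fun x => f x * g x) μ) :
    (∫ x, f x * g x ∂μ) ^ 2 ≤ (∫ x, f x * f x ∂μ) * (∫ x, g x * g x ∂μ) := by
  set A := ∫ x, g x * g x ∂μ with hA
  set B := ∫ x, f x * g x ∂μ with hB
  set C := ∫ x, f x * f x ∂μ with hC
  have key : ∀ t : ℝ, 0 ≤ A * (t * t) + (2 * B) * t + C := by
    intro t
    have h1 : (fun x => (f x + t * g x) * (f x + t * g x))
        = fun x => f x * f x + (2 * t) * (f x * g x) + (t * t) * (g x * g x) := by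
      funext x; ring
    have h2 : 0 ≤ ∫ x, (f x + t * g x) * (f x + t * g x) ∂μ :=
      integral_nonneg fun x => mul_self_nonneg _
    have hfa : Integrable (fun x => f x * f x + 2 * t * (f x * g x)) μ :=
      hf2.add (hfg.const_mul _)
    have hga : Integrable (fun x => t * t * (g x * g x)) μ := hg2.const_mul _
    rw [h1, integral_add hfa hga, integral_add hf2 (hfg.const_mul _),
      integral_const_mul, integral_const_mul] at h2
    linarith
  have hd := discrim_le_zero key
  rw [discrim] at hd
  nlinarith

/-- For `W` continuous, bounded, `ℤ^d`-periodic in each of its `N` arguments,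
and a unit vector `e`: `0 < e^{-osc(W)/σ} ≤ 1/(Z₁·Zhat₁) ≤ m(e) ≤ 1`. -/
theorem stmt2 (d N : ℕ) (hd : 1 ≤ d) (hN : 1 ≤ N) (σ : ℝ) (hσ : 0 < σ)
    (W : (Fin N → Fin d → ℝ) → ℝ) (hWcont : Continuous W)
    (hWper : ∀ (y : Fin N → Fin d → ℝ) (i : Fin N) (k : Fin d → ℤ),
      W (Function.update y i (y i + fun j => (k j : ℝ))) = W y)
    (hWbdd : ∃ C : ℝ, ∀ y, |W y| ≤ C)
    (Z₁ Zhat₁ oscW : ℝ)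
    (hZ₁ : Z₁ = ∫ y in Set.Icc (0 : Fin N → Fin d → ℝ) 1, Real.exp (-W y / σ))
    (hZhat₁ : Zhat₁ = ∫ y in Set.Icc (0 : Fin N → Fin d → ℝ) 1, Real.exp (W y / σ))
    (hosc : oscW = sSup (Set.range W) - sInf (Set.range W))
    (e : Fin d → ℝ) (he : ∑ j, e j ^ 2 = 1) :
    0 < Real.exp (-oscW / σ) ∧
    Real.exp (-oscW / σ) ≤ 1 / (Z₁ * Zhat₁) ∧
    1 / (Z₁ * Zhat₁) ≤ mEff d N σ W e ∧
    mEff d N σ W e ≤ 1 := by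
  obtain ⟨C, hC⟩ := hWbdd
  set cube := Set.Icc (0 : Fin N → Fin d → ℝ) 1 with hcube
  have hvol : volume cube = 1 := cubevolNd d N
  have hintOn : ∀ {f : (Fin N → Fin d → ℝ) → ℝ}, Continuous f → IntegrableOn f cube :=
    fun hf => hf.integrableOn_Icc
  have hba : BddAbove (Set.range W) := ⟨C, by rintro _ ⟨y, rfl⟩; exact (abs_le.1 (hC y)).2⟩
  have hbb : BddBelow (Set.range W) := ⟨-C, by rintro _ ⟨y, rfl⟩; exact (abs_le.1 (hC y)).1⟩
  set Mw := sSup (Set.range W) with hMw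
  set mw := sInf (Set.range W) with hmw
  have hWle : ∀ y, W y ≤ Mw := fun y => le_csSup hba ⟨y, rfl⟩
  have hWge : ∀ y, mw ≤ W y := fun y => csInf_le hbb ⟨y, rfl⟩
  have hEcont : Continuous fun y : Fin N → Fin d → ℝ => Real.exp (-W y / σ) :=
    Real.continuous_exp.comp (hWcont.neg.div_const σ)
  have hEcont' : Continuous fun y : Fin N → Fin d → ℝ => Real.exp (W y / σ) :=
    Real.continuous_exp.comp (hWcont.div_const σ)
  have hconstInt : ∀ c : ℝ, ∫ y in cube, (fun _ => c) y = c := by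
    intro c
    rw [setIntegral_const, measureReal_def, hvol]
    simp
  have hZ₁ge : Real.exp (-Mw / σ) ≤ Z₁ := by
    rw [hZ₁, ← hconstInt (Real.exp (-Mw / σ))]
    apply setIntegral_mono_on (hintOn continuous_const) (hintOn hEcont) measurableSet_Icc
    intro y _
    exact Real.exp_le_exp.2 (by gcongr; exact hWle y)
  have hZ₁le : Z₁ ≤ Real.exp (-mw / σ) := by
    rw [hZ₁, ← hconstInt (Real.exp (-mw / σ))]
    apply setIntegral_mono_on (hintOn hEcont) (hintOn continuous_const) measurableSet_Icc
    intro y _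
    exact Real.exp_le_exp.2 (by gcongr; exact hWge y)
  have hZhge : Real.exp (mw / σ) ≤ Zhat₁ := by
    rw [hZhat₁, ← hconstInt (Real.exp (mw / σ))]
    apply setIntegral_mono_on (hintOn continuous_const) (hintOn hEcont') measurableSet_Icc
    intro y _
    exact Real.exp_le_exp.2 (by gcongr; exact hWge y)
  have hZhle : Zhat₁ ≤ Real.exp (Mw / σ) := by
    rw [hZhat₁, ← hconstInt (Real.exp (Mw / σ))]
    apply setIntegral_mono_on (hintOn hEcont') (hintOn continuous_const) measurableSet_Icc
    intro y _
    exact Real.exp_le_exp.2 (by gcongr; exact hWle y)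
  have hZ₁pos : 0 < Z₁ := lt_of_lt_of_le (Real.exp_pos _) hZ₁ge
  have hZhpos : 0 < Zhat₁ := lt_of_lt_of_le (Real.exp_pos _) hZhge
  have hprodpos : 0 < Z₁ * Zhat₁ := mul_pos hZ₁pos hZhpos
  have hprodle : Z₁ * Zhat₁ ≤ Real.exp (oscW / σ) := by
    calc Z₁ * Zhat₁ ≤ Real.exp (-mw / σ) * Real.exp (Mw / σ) :=
          mul_le_mul hZ₁le hZhle hZhpos.le (Real.exp_pos _).le
      _ = Real.exp (oscW / σ) := by
          rw [← Real.exp_add, hosc]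
          congr 1
          field_simp
          ring
  -- the set S
  set S := { r : ℝ | ∃ v : Fin N → (Fin d → ℝ) → ℝ,
      (∀ i, ContDiff ℝ 1 (v i)) ∧ (∀ i, ZdPeriodic (v i)) ∧
      r = ∫ y in Set.Icc (0 : Fin N → Fin d → ℝ) 1,
            (∑ j, (e j + ∑ i, grad (v i) (y i) j) ^ 2) * Real.exp (-W y / σ) } with hSdef
  have hmEff : mEff d N σ W e = Z₁⁻¹ * sInf S := by
    rw [mEff, ← hcube, ← hZ₁, hSdef]
  have hg0 : ∀ (x : Fin d → ℝ) (j : Fin d), grad (fun _ => (0:ℝ)) x j = 0 := by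
    intro x j
    simp [grad]
  have hZmem : Z₁ ∈ S := by
    refine ⟨fun _ _ => 0, fun i => contDiff_const, fun i x k => rfl, ?_⟩
    rw [hZ₁]
    refine (setIntegral_congr_fun measurableSet_Icc fun y _ => ?_).symm
    simp [hg0, he]
  have hlow : ∀ r ∈ S, 1 / Zhat₁ ≤ r := by
    rintro r ⟨v, hC1, hPer, rfl⟩
    have hgradc : ∀ (i : Fin N) (j : Fin d),
        Continuous fun y : Fin N → Fin d → ℝ => grad (v i) (y i) j :=
      fun i j => (gradCont (hC1 i) j).comp (continuous_apply i)
    have hFc : ∀ j : Fin d,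
        Continuous fun y : Fin N → Fin d → ℝ => e j + ∑ i, grad (v i) (y i) j :=
      fun j => continuous_const.add (continuous_finset_sum _ fun i _ => hgradc i j)
    set u : (Fin N → Fin d → ℝ) → ℝ :=
      fun y => ∑ j, e j * (e j + ∑ i, grad (v i) (y i) j) with hu
    have huc : Continuous u :=
      continuous_finset_sum _ fun j _ => continuous_const.mul (hFc j)
    have hGint : ∀ (i : Fin N) (j : Fin d), ∫ y in cube, grad (v i) (y i) j = 0 :=
      fun i j => (marg d N i fun x => grad (v i) x j).trans
        (keyGrad' hd (v i) (hC1 i) (hPer i) j)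
    have hFint : ∀ j : Fin d, ∫ y in cube, (e j + ∑ i, grad (v i) (y i) j) = e j := by
      intro j
      have hadd : IntegrableOn (fun _ : Fin N → Fin d → ℝ => e j) cube :=
        hintOn continuous_const
      have hsum : IntegrableOn
          (fun y : Fin N → Fin d → ℝ => ∑ i, grad (v i) (y i) j) cube :=
        hintOn (continuous_finset_sum _ fun i _ => hgradc i j)
      rw [integral_add hadd hsum, integral_finset_sum _ (fun i _ => hintOn (hgradc i j))]
      simp only [hGint]
      rw [hconstInt (e j)]
      simp
    have hI : ∫ y in cube, u y = 1 := by
      rw [hu]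
      rw [integral_finset_sum _ (fun j _ => (hintOn (f := fun y => e j * (e j + ∑ i, grad (v i) (y i) j)) (continuous_const.mul (hFc j))))]
      simp_rw [integral_const_mul]
      rw [Finset.sum_congr rfl fun j _ => by rw [hFint j]]
      rw [← he]
      exact Finset.sum_congr rfl fun j _ => (sq (e j)).symm
    set f : (Fin N → Fin d → ℝ) → ℝ := fun y => u y * Real.exp (-W y / (2 * σ)) with hf
    set g : (Fin N → Fin d → ℝ) → ℝ := fun y => Real.exp (W y / (2 * σ)) with hg
    have hfc : Continuous f :=
      huc.mul (Real.continuous_exp.comp (hWcont.neg.div_const _))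
    have hgc2 : Continuous g := Real.continuous_exp.comp (hWcont.div_const _)
    have hfgu : ∀ y, f y * g y = u y := by
      intro y
      rw [hf, hg]
      simp only []
      rw [mul_assoc, ← Real.exp_add]
      have : -W y / (2 * σ) + W y / (2 * σ) = 0 := by ring
      rw [this, Real.exp_zero, mul_one]
    have hffu : ∀ y, f y * f y = u y ^ 2 * Real.exp (-W y / σ) := by
      intro y
      rw [hf]
      simp only []
      have : Real.exp (-W y / (2 * σ)) * Real.exp (-W y / (2 * σ))
          = Real.exp (-W y / σ) := by
        rw [← Real.exp_add]
        congr 1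
        field_simp
        ring
      rw [← this]
      ring
    have hggu : ∀ y, g y * g y = Real.exp (W y / σ) := by
      intro y
      rw [hg]
      simp only []
      rw [← Real.exp_add]
      congr 1
      field_simp
      ring
    have hCS := csInt (volume.restrict cube) f g
      (hintOn (hfc.mul hfc)) (hintOn (hgc2.mul hgc2)) (hintOn (hfc.mul hgc2))
    have hfgI : ∫ y in cube, f y * g y = 1 := by
      rw [setIntegral_congr_fun measurableSet_Icc fun y _ => hfgu y]
      exact hI
    have hggI : ∫ y in cube, g y * g y = Zhat₁ := by
      rw [setIntegral_congr_fun measurableSet_Icc fun y _ => hggu y]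
      exact hZhat₁.symm
    have hffI : ∫ y in cube, f y * f y
        = ∫ y in cube, u y ^ 2 * Real.exp (-W y / σ) :=
      setIntegral_congr_fun measurableSet_Icc fun y _ => hffu y
    have hffle : ∫ y in cube, u y ^ 2 * Real.exp (-W y / σ)
        ≤ ∫ y in Set.Icc (0 : Fin N → Fin d → ℝ) 1,
            (∑ j, (e j + ∑ i, grad (v i) (y i) j) ^ 2) * Real.exp (-W y / σ) := by
      apply setIntegral_mono_on
        (hintOn ((huc.pow 2).mul hEcont))
        (hintOn ((continuous_finset_sum _ fun j _ => (hFc j).pow 2).mul hEcont))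
        measurableSet_Icc
      intro y _
      apply mul_le_mul_of_nonneg_right _ (Real.exp_nonneg _)
      have hcs2 := Finset.sum_mul_sq_le_sq_mul_sq Finset.univ e
        (fun j => e j + ∑ i, grad (v i) (y i) j)
      rw [he, one_mul] at hcs2
      exact hcs2
    rw [hfgI, hffI, hggI] at hCS
    rw [div_le_iff₀ hZhpos]
    calc (1:ℝ) = 1 ^ 2 := (one_pow 2).symm
      _ ≤ (∫ y in cube, u y ^ 2 * Real.exp (-W y / σ)) * Zhat₁ := hCS
      _ ≤ _ := mul_le_mul_of_nonneg_right hffle hZhpos.le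
  have hSne : S.Nonempty := ⟨Z₁, hZmem⟩
  have hbddS : BddBelow S := ⟨1 / Zhat₁, fun r hr => hlow r hr⟩
  have hInfge : 1 / Zhat₁ ≤ sInf S := le_csInf hSne hlow
  have hInfle : sInf S ≤ Z₁ := csInf_le hbddS hZmem
  refine ⟨Real.exp_pos _, ?_, ?_, ?_⟩
  · have h1 : Real.exp (-oscW / σ) = 1 / Real.exp (oscW / σ) := by
      rw [one_div, ← Real.exp_neg]
      congr 1
      ring
    rw [h1]
    exact one_div_le_one_div_of_le hprodpos hprodle
  · rw [hmEff]
    have h2 : 1 / (Z₁ * Zhat₁) = Z₁⁻¹ * (1 / Zhat₁) := by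
      field_simp
    rw [h2]
    exact mul_le_mul_of_nonneg_left hInfge (inv_nonneg.2 hZ₁pos.le)
  · rw [hmEff]
    calc Z₁⁻¹ * sInf S ≤ Z₁⁻¹ * Z₁ :=
          mul_le_mul_of_nonneg_left hInfle (inv_nonneg.2 hZ₁pos.le)
      _ = 1 := inv_mul_cancel₀ hZ₁pos.ne'
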